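/- Correctness of the SetCover reduction: let U = {a_1, …, a_n} be a finite set, let S_1, …, S_m ⊆ U, let k ∈ ℕ, and let B(U, S_1, …, S_m) be the associated broadcast protocol. Then there exists a subcollection of {S_1, …, S_m} of size at most k whose union is U if and only if there exists a reconfigurable execution of B(U, S_1, …, S_m) covering {☺} with exactly k + 1 nodes, and also if and only if there exists a lossy execution of B(U, S_1, …, S_m) covering {☺} with exactly k + 1 nodes. -/
import Mathlib


/-- A broadcast protocol over finite state set `Q` and finite message alphabet `M`.
`I` is the set of initial states, `br q m q'` means `(q, !!m, q') ∈ Δ` (a broadcast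
transition) and `rcv q m q'` means `(q, ??m, q') ∈ Δ` (a reception transition).
The protocol is complete for receptions. -/
structure BroadcastProtocol (Q M : Type) [Fintype Q] [DecidableEq Q] [Fintype M] where
  I : Finset Q
  br : Q → M → Q → Prop
  rcv : Q → M → Q → Prop
  complete : ∀ q m, ∃ q', rcv q m q'

section Execs
variable {Q M : Type} [Fintype Q] [DecidableEq Q] [Fintype M]

/-- A reconfigurable execution of length `r` over the finite node type `ν`:
`lab i v` is the state of node `v` in the `i`-th configuration, `edges i` is the
(symmetric, irreflexive) communication topology of the `i`-th configuration,
and in the `i`-th step node `sender i` broadcasts message `msg i` to its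
neighbours; the topology may change arbitrarily at each step. -/
structure RExec (P : BroadcastProtocol Q M) (ν : Type) [Fintype ν] [DecidableEq ν]
    (r : ℕ) where
  lab : Fin (r + 1) → ν → Q
  edges : Fin (r + 1) → ν → ν → Prop
  edges_symm : ∀ i, Symmetric (edges i)
  edges_irrefl : ∀ i, Irreflexive (edges i)
  sender : Fin r → ν
  msg : Fin r → M
  init : ∀ v, lab 0 v ∈ P.I
  step_br : ∀ i : Fin r, P.br (lab i.castSucc (sender i)) (msg i) (lab i.succ (sender i))
  step_rcv : ∀ i : Fin r, ∀ v, v ≠ sender i →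
    (edges i.castSucc (sender i) v → P.rcv (lab i.castSucc v) (msg i) (lab i.succ v)) ∧
    (¬ edges i.castSucc (sender i) v → lab i.succ v = lab i.castSucc v)

namespace RExec

variable {P : BroadcastProtocol Q M} {ν : Type} [Fintype ν] [DecidableEq ν] {r : ℕ}

/-- Labelling of the last configuration. -/
def lastLab (ρ : RExec P ν r) : ν → Q := ρ.lab (Fin.last r)

/-- The execution covers `F` if a node of the last configuration is labelled in `F`. -/
def Covers (ρ : RExec P ν r) (F : Set Q) : Prop := ∃ v, ρ.lastLab v ∈ F

/-- The active length of node `v`: the number of steps in which `v` broadcasts. -/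
def activeLen (ρ : RExec P ν r) (v : ν) : ℕ :=
  (Finset.univ.filter fun i : Fin r => ρ.sender i = v).card

end RExec

/-- A lossy execution of length `r` over the finite node type `ν`: the communication
topology `E` is fixed throughout, and in the `i`-th step node `sender i` broadcasts
message `msg i`, which is lost (reaching no node) iff `lost i = true`. -/
structure LExec (P : BroadcastProtocol Q M) (ν : Type) [Fintype ν] [DecidableEq ν]
    (r : ℕ) where
  lab : Fin (r + 1) → ν → Q
  E : ν → ν → Prop
  E_symm : Symmetric E
  E_irrefl : Irreflexive E
  sender : Fin r → ν
  msg : Fin r → M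
  lost : Fin r → Bool
  init : ∀ v, lab 0 v ∈ P.I
  step_br : ∀ i : Fin r, P.br (lab i.castSucc (sender i)) (msg i) (lab i.succ (sender i))
  step_lost : ∀ i : Fin r, lost i = true → ∀ v, v ≠ sender i →
    lab i.succ v = lab i.castSucc v
  step_real : ∀ i : Fin r, lost i = false → ∀ v, v ≠ sender i →
    (E (sender i) v → P.rcv (lab i.castSucc v) (msg i) (lab i.succ v)) ∧
    (¬ E (sender i) v → lab i.succ v = lab i.castSucc v)

namespace LExec

variable {P : BroadcastProtocol Q M} {ν : Type} [Fintype ν] [DecidableEq ν] {r : ℕ}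

/-- Labelling of the last configuration. -/
def lastLab (ρ : LExec P ν r) : ν → Q := ρ.lab (Fin.last r)

/-- The execution covers `F` if a node of the last configuration is labelled in `F`. -/
def Covers (ρ : LExec P ν r) (F : Set Q) : Prop := ∃ v, ρ.lastLab v ∈ F

/-- The active length of node `v`: the number of broadcasts (lost or not) of `v`. -/
def activeLen (ρ : LExec P ν r) (v : ν) : ℕ :=
  (Finset.univ.filter fun i : Fin r => ρ.sender i = v).card

/-- The real active length of node `v`: the number of non-lost broadcasts of `v`. -/
def realActiveLen (ρ : LExec P ν r) (v : ν) : ℕ :=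
  (Finset.univ.filter fun i : Fin r => ρ.sender i = v ∧ ρ.lost i = false).card

end LExec

end Execs
/- ## The SetCover protocol -/

abbrev SCQ (n m : ℕ) := Fin m ⊕ (Fin n ⊕ Unit)

def SCBr (n m : ℕ) (S : Fin m → Finset (Fin n)) : SCQ n m → Fin n → SCQ n m → Prop
  | .inl j, a, q' => a ∈ S j ∧ q' = .inl j
  | _, _, _ => False

def SCRcvF (n m : ℕ) (q : SCQ n m) (a : Fin n) : SCQ n m :=
  match q with
  | .inr (.inl i) =>
      if (a : ℕ) = (i : ℕ) then
        if h : (i : ℕ) + 1 < n then .inr (.inl ⟨(i : ℕ) + 1, h⟩) else .inr (.inr ())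
      else .inr (.inl i)
  | q => q

def SCProt (n m : ℕ) (hn : 0 < n) (S : Fin m → Finset (Fin n)) :
    BroadcastProtocol (SCQ n m) (Fin n) where
  I := (Finset.univ.image (Sum.inl : Fin m → SCQ n m)) ∪ {Sum.inr (Sum.inl ⟨0, hn⟩)}
  br := SCBr n m S
  rcv := fun q a q' => q' = SCRcvF n m q a
  complete := fun q a => ⟨SCRcvF n m q a, rfl⟩

def SCSmiley (n m : ℕ) : SCQ n m := Sum.inr (Sum.inr ())



/- ## Auxiliary material for the proof -/

namespace SCAux

open Finset

variable {n m k : ℕ}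

/-- The state of the "verifier" node after having received `p` messages. -/
def st (n m : ℕ) (p : ℕ) : SCQ n m :=
  if h : p < n then Sum.inr (Sum.inl ⟨p, h⟩) else Sum.inr (Sum.inr ())

lemma scbr_inr {S : Fin m → Finset (Fin n)} {x : Fin n ⊕ Unit} {a : Fin n} {q' : SCQ n m} :
    SCBr n m S (Sum.inr x) a q' → False := fun h => h

lemma rcvF_inl (j : Fin m) (a : Fin n) : SCRcvF n m (Sum.inl j) a = Sum.inl j := rfl

lemma rcvF_smiley (a : Fin n) :
    SCRcvF n m (Sum.inr (Sum.inr ())) a = Sum.inr (Sum.inr ()) := rfl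

lemma rcvF_q (i : Fin n) (a : Fin n) :
    SCRcvF n m (Sum.inr (Sum.inl i)) a =
      if (a : ℕ) = (i : ℕ) then
        (if h : (i : ℕ) + 1 < n then Sum.inr (Sum.inl ⟨(i : ℕ) + 1, h⟩)
          else Sum.inr (Sum.inr ()))
      else Sum.inr (Sum.inl i) := rfl

lemma st_step (i : Fin n) : SCRcvF n m (st n m (i : ℕ)) i = st n m ((i : ℕ) + 1) := by
  rw [st, dif_pos i.isLt, rcvF_q, if_pos rfl, st]

lemma rcvF_inr (x : Fin n ⊕ Unit) (a : Fin n) :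
    ∃ y, SCRcvF n m (Sum.inr x) a = Sum.inr y := by
  cases x with
  | inl i =>
    rw [rcvF_q]
    split_ifs <;> exact ⟨_, rfl⟩
  | inr u => exact ⟨_, rfl⟩

/-- Generic backward direction: any execution-like data reaching `☺` yields a set cover. -/
lemma backward (hn : 0 < n) (S : Fin m → Finset (Fin n)) (r : ℕ)
    (lab : Fin (r + 1) → Fin (k + 1) → SCQ n m) (sender : Fin r → Fin (k + 1))
    (msg : Fin r → Fin n)
    (hinit : ∀ v, lab 0 v ∈ (SCProt n m hn S).I)
    (hbr : ∀ i : Fin r, SCBr n m S (lab i.castSucc (sender i)) (msg i) (lab i.succ (sender i)))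
    (hstep : ∀ (i : Fin r) (v), v ≠ sender i →
      lab i.succ v = SCRcvF n m (lab i.castSucc v) (msg i) ∨ lab i.succ v = lab i.castSucc v)
    (v₀ : Fin (k + 1)) (hsm : lab (Fin.last r) v₀ = SCSmiley n m) :
    ∃ C : Finset (Fin m), C.card ≤ k ∧ ∀ a : Fin n, ∃ j ∈ C, a ∈ S j := by
  classical
  have hA : ∀ (j : Fin m) (v), lab 0 v = Sum.inl j → ∀ i, lab i v = Sum.inl j := by
    intro j v h0 i
    induction i using Fin.induction with
    | zero => exact h0
    | succ i ih =>
      by_cases hvs : v = sender i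
      · have hb := hbr i
        rw [← hvs, ih] at hb
        exact hb.2
      · rcases hstep i v hvs with h | h
        · rw [h, ih, rcvF_inl]
        · rw [h, ih]
  have hA2 : ∀ (x) (v), lab 0 v = Sum.inr x → ∀ i, ∃ y, lab i v = Sum.inr y := by
    intro x v h0 i
    induction i using Fin.induction with
    | zero => exact ⟨x, h0⟩
    | succ i ih =>
      obtain ⟨y, hy⟩ := ih
      by_cases hvs : v = sender i
      · have hb := hbr i
        rw [← hvs, hy] at hb
        exact absurd hb scbr_inr
      · rcases hstep i v hvs with h | h
        · rw [h, hy]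
          exact rcvF_inr y (msg i)
        · rw [h, hy]
          exact ⟨y, rfl⟩
  set f : Fin (k + 1) → Finset (Fin m) := fun w =>
    match lab 0 w with | Sum.inl j => {j} | _ => ∅ with hf
  set C : Finset (Fin m) := Finset.univ.biUnion f with hCdef
  have hmemC : ∀ (w) (j : Fin m), lab 0 w = Sum.inl j → j ∈ C := by
    intro w j h
    refine Finset.mem_biUnion.2 ⟨w, Finset.mem_univ _, ?_⟩
    simp [hf, h]
  have hv0 : lab 0 v₀ = Sum.inr (Sum.inl ⟨0, hn⟩) := by
    have hi := hinit v₀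
    simp only [SCProt, Finset.mem_union, Finset.mem_image, Finset.mem_singleton] at hi
    rcases hi with ⟨j, -, hj⟩ | h
    · exfalso
      have h2 := hA j v₀ hj.symm (Fin.last r)
      rw [hsm] at h2
      simp [SCSmiley] at h2
    · exact h
  have hcard : C.card ≤ k := by
    have h1 : C.card ≤ ∑ w, (f w).card := Finset.card_biUnion_le
    have h2 : ∑ w, (f w).card = (f v₀).card + ∑ w ∈ Finset.univ.erase v₀, (f w).card :=
      (Finset.add_sum_erase _ _ (Finset.mem_univ v₀)).symm
    have h3 : (f v₀).card = 0 := by simp [hf, hv0]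
    have h4 : ∑ w ∈ Finset.univ.erase v₀, (f w).card ≤ ∑ _w ∈ Finset.univ.erase v₀, 1 := by
      refine Finset.sum_le_sum ?_
      intro w _
      rcases hw : lab 0 w with j | x <;> simp [hf, hw]
    have h5 : ∑ _w ∈ Finset.univ.erase v₀, 1 = k := by
      rw [Finset.sum_const, smul_eq_mul, mul_one, Finset.card_erase_of_mem (Finset.mem_univ _),
        Finset.card_univ, Fintype.card_fin]
      omega
    omega
  have hmsg : ∀ i : Fin r, ∃ j ∈ C, msg i ∈ S j := by
    intro i
    have hb := hbr i
    rcases hw : lab i.castSucc (sender i) with j | x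
    · rw [hw] at hb
      refine ⟨j, ?_, hb.1⟩
      have h0 := hinit (sender i)
      simp only [SCProt, Finset.mem_union, Finset.mem_image, Finset.mem_singleton] at h0
      rcases h0 with ⟨j', -, hj'⟩ | h0
      · have h2 := hA j' (sender i) hj'.symm i.castSucc
        rw [hw] at h2
        obtain rfl := Sum.inl.inj h2
        exact hmemC _ _ hj'.symm
      · obtain ⟨y, hy⟩ := hA2 _ _ h0 i.castSucc
        rw [hw] at hy
        exact absurd hy (by simp)
    · rw [hw] at hb
      exact absurd hb scbr_inr
  have hInv : ∀ i : Fin (r + 1), ∃ p : ℕ,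
      lab i v₀ = st n m p ∧ ∀ a : Fin n, (a : ℕ) < p → ∃ j ∈ C, a ∈ S j := by
    intro i
    induction i using Fin.induction with
    | zero =>
      refine ⟨0, ?_, fun a ha => absurd ha (Nat.not_lt_zero _)⟩
      rw [hv0, st, dif_pos hn]
    | succ i ih =>
      obtain ⟨p, hl, hg⟩ := ih
      have hvs : v₀ ≠ sender i := by
        intro h
        have hb := hbr i
        rw [← h, hl] at hb
        unfold st at hb
        split_ifs at hb <;> exact scbr_inr hb
      rcases hstep i v₀ hvs with h | h
      · by_cases hpn : p < n
        · rw [hl, st, dif_pos hpn, rcvF_q] at h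
          by_cases hma : ((msg i : ℕ) = p)
          · refine ⟨p + 1, ?_, ?_⟩
            · rw [h, if_pos hma, st]
            · intro a ha
              rcases Nat.lt_succ_iff_lt_or_eq.1 ha with ha | ha
              · exact hg a ha
              · have haeq : a = msg i := Fin.ext (by rw [ha, hma])
                rw [haeq]
                exact hmsg i
          · refine ⟨p, ?_, hg⟩
            rw [h, if_neg hma, st, dif_pos hpn]
        · refine ⟨p, ?_, hg⟩
          rw [hl, st, dif_neg hpn] at h
          rw [h, rcvF_smiley, st, dif_neg hpn]
      · exact ⟨p, h.trans hl, hg⟩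
  obtain ⟨p, hl, hg⟩ := hInv (Fin.last r)
  have hpn : ¬ p < n := by
    intro hpn
    rw [hsm, st, dif_pos hpn] at hl
    simp [SCSmiley] at hl
  exact ⟨C, hcard, fun a => hg a (lt_of_lt_of_le a.isLt (le_of_not_gt hpn))⟩

/-- Forward direction: a set cover yields execution data reaching `☺`. -/
lemma construct (hn : 0 < n) (S : Fin m → Finset (Fin n))
    (C : Finset (Fin m)) (hCk : C.card ≤ k) (hcov : ∀ a : Fin n, ∃ j ∈ C, a ∈ S j) :
    ∃ (lab : Fin (n + 1) → Fin (k + 1) → SCQ n m) (sender : Fin n → Fin (k + 1))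
      (msg : Fin n → Fin n),
      (∀ v, lab 0 v ∈ (SCProt n m hn S).I) ∧
      (∀ i : Fin n, SCBr n m S (lab i.castSucc (sender i)) (msg i) (lab i.succ (sender i))) ∧
      (∀ (i : Fin n) (v), v ≠ sender i →
        lab i.succ v = SCRcvF n m (lab i.castSucc v) (msg i)) ∧
      lab (Fin.last n) 0 = SCSmiley n m := by
  classical
  choose jf hjC hjS using hcov
  obtain ⟨j0, hj0⟩ : ∃ j, j ∈ C := ⟨jf ⟨0, hn⟩, hjC _⟩
  set e := C.equivFin with he
  set g : Fin k → Fin m := fun u =>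
    if h : (u : ℕ) < C.card then (e.symm ⟨u, h⟩ : Fin m) else j0 with hg
  set uf : Fin n → Fin k := fun a =>
    ⟨(e ⟨jf a, hjC a⟩ : ℕ), lt_of_lt_of_le (e ⟨jf a, hjC a⟩).isLt hCk⟩ with huf
  have hguf : ∀ a, g (uf a) = jf a := by
    intro a
    have h : ((uf a : ℕ)) < C.card := (e ⟨jf a, hjC a⟩).isLt
    rw [hg]
    simp only
    rw [dif_pos h]
    have h2 : (⟨(uf a : ℕ), h⟩ : Fin C.card) = e ⟨jf a, hjC a⟩ := rfl
    rw [h2, Equiv.symm_apply_apply]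
  refine ⟨fun i v => Fin.cases (st n m i) (fun u => Sum.inl (g u)) v,
    fun i => (uf i).succ, fun i => i, ?_, ?_, ?_, ?_⟩
  · intro v
    induction v using Fin.cases with
    | zero =>
      simp only [Fin.cases_zero]
      have : st n m ((0 : Fin (n + 1)) : ℕ) = Sum.inr (Sum.inl ⟨0, hn⟩) := by
        rw [st]
        simp [hn]
      rw [this]
      simp [SCProt]
    | succ u =>
      simp only [Fin.cases_succ]
      simp [SCProt]
  · intro i
    simp only [Fin.cases_succ]
    exact ⟨by rw [hguf]; exact hjS i, rfl⟩
  · intro i v hv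
    induction v using Fin.cases with
    | zero =>
      simp only [Fin.cases_zero]
      rw [show ((i.castSucc : Fin (n + 1)) : ℕ) = (i : ℕ) from Fin.coe_castSucc i,
        show ((i.succ : Fin (n + 1)) : ℕ) = (i : ℕ) + 1 from Fin.val_succ i]
      exact (st_step i).symm
    | succ u =>
      simp only [Fin.cases_succ]
      exact (rcvF_inl _ _).symm
  · simp only [Fin.cases_zero]
    rw [Fin.val_last, st, dif_neg (lt_irrefl n)]
    rfl

end SCAux

/-- **Correctness of the SetCover reduction.** For `U = Fin n` (with `n ≥ 1`, so that
the initial state `q_1` exists) and subsets `S 0, …, S (m-1) ⊆ U`: there is a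
subcollection of at most `k` of the sets whose union is `U` iff there is a
reconfigurable execution of the associated protocol covering `{☺}` with exactly
`k + 1` nodes, and also iff there is a lossy execution of the associated protocol
covering `{☺}` with exactly `k + 1` nodes. -/
theorem setcover_reduction (n m k : ℕ) (hn : 0 < n) (S : Fin m → Finset (Fin n)) :
    ((∃ C : Finset (Fin m), C.card ≤ k ∧ ∀ a : Fin n, ∃ j ∈ C, a ∈ S j) ↔
      ∃ (r : ℕ) (ρ : RExec (SCProt n m hn S) (Fin (k + 1)) r),
        ρ.Covers {SCSmiley n m}) ∧
    ((∃ C : Finset (Fin m), C.card ≤ k ∧ ∀ a : Fin n, ∃ j ∈ C, a ∈ S j) ↔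
      ∃ (r : ℕ) (ρ : LExec (SCProt n m hn S) (Fin (k + 1)) r),
        ρ.Covers {SCSmiley n m}) := by
  classical
  have bwR : (∃ (r : ℕ) (ρ : RExec (SCProt n m hn S) (Fin (k + 1)) r),
      ρ.Covers {SCSmiley n m}) →
      ∃ C : Finset (Fin m), C.card ≤ k ∧ ∀ a : Fin n, ∃ j ∈ C, a ∈ S j := by
    rintro ⟨r, ρ, v₀, hv⟩
    refine SCAux.backward hn S r ρ.lab ρ.sender ρ.msg ρ.init ρ.step_br ?_ v₀ hv
    intro i v hvs
    by_cases he : ρ.edges i.castSucc (ρ.sender i) v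
    · exact Or.inl ((ρ.step_rcv i v hvs).1 he)
    · exact Or.inr ((ρ.step_rcv i v hvs).2 he)
  have bwL : (∃ (r : ℕ) (ρ : LExec (SCProt n m hn S) (Fin (k + 1)) r),
      ρ.Covers {SCSmiley n m}) →
      ∃ C : Finset (Fin m), C.card ≤ k ∧ ∀ a : Fin n, ∃ j ∈ C, a ∈ S j := by
    rintro ⟨r, ρ, v₀, hv⟩
    refine SCAux.backward hn S r ρ.lab ρ.sender ρ.msg ρ.init ρ.step_br ?_ v₀ hv
    intro i v hvs
    cases hl : ρ.lost i with
    | true => exact Or.inr (ρ.step_lost i hl v hvs)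
    | false =>
      by_cases he : ρ.E (ρ.sender i) v
      · exact Or.inl ((ρ.step_real i hl v hvs).1 he)
      · exact Or.inr ((ρ.step_real i hl v hvs).2 he)
  have fw : (∃ C : Finset (Fin m), C.card ≤ k ∧ ∀ a : Fin n, ∃ j ∈ C, a ∈ S j) →
      (∃ (r : ℕ) (ρ : RExec (SCProt n m hn S) (Fin (k + 1)) r), ρ.Covers {SCSmiley n m}) ∧
      (∃ (r : ℕ) (ρ : LExec (SCProt n m hn S) (Fin (k + 1)) r), ρ.Covers {SCSmiley n m}) := by
    rintro ⟨C, hCk, hcov⟩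
    obtain ⟨lab, sender, msg, hinit, hbr, hrcv, hlast⟩ := SCAux.construct hn S C hCk hcov
    constructor
    · refine ⟨n, ⟨lab, fun _ v w => v ≠ w, fun _ _ _ h => h.symm, fun _ v h => h rfl,
        sender, msg, hinit, hbr, ?_⟩, 0, hlast⟩
      intro i v hvs
      exact ⟨fun _ => hrcv i v hvs, fun h => absurd (Ne.symm hvs) h⟩
    · refine ⟨n, ⟨lab, fun v w => v ≠ w, fun _ _ h => h.symm, fun v h => h rfl,
        sender, msg, fun _ => false, hinit, hbr, fun i h => by simp at h, ?_⟩, 0, hlast⟩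
      intro i _ v hvs
      exact ⟨fun _ => hrcv i v hvs, fun h => absurd (Ne.symm hvs) h⟩
  constructor
  · exact ⟨fun h => (fw h).1, bwR⟩
  · exact ⟨fun h => (fw h).2, bwL⟩
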